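/- Define $\Psi(a) = \int_0^a \sqrt{\Phi(s)/(1+s)}\, ds$ and $\Phi(s) = (1+s)\ln(1+s) - s$. There is a constant $C > 0$ such that for all $a \geq 0$, $|\Psi(a)|^2 \ln(1+a) \leq C\, |\Phi(a)|^2$. -/

import Mathlib

open Real

lemma log_ge_one_sub_inv {y : ℝ} (hy : 0 < y) : 1 - 1 / y ≤ Real.log y := by
  have h := Real.log_le_sub_one_of_pos (show (0:ℝ) < 1 / y by positivity)
  rw [Real.log_div one_ne_zero hy.ne', Real.log_one] at h
  linarith

lemma key_ineq (a : ℝ) (ha : 0 ≤ a) : 2 * a ≤ (2 + a) * Real.log (1 + a) := by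
  set f : ℝ → ℝ := fun x => (2 + x) * Real.log (1 + x) - 2 * x with hf
  have hderiv : ∀ x : ℝ, 0 < x →
      HasDerivAt f (Real.log (1 + x) + (2 + x) * (1 / (1 + x)) - 2) x := by
    intro x hx
    have h1 : (0:ℝ) < 1 + x := by linarith
    have hlog : HasDerivAt (fun y : ℝ => Real.log (1 + y)) (1 / (1 + x)) x := by
      have := (Real.hasDerivAt_log h1.ne').comp x
        ((hasDerivAt_const x (1:ℝ)).add (hasDerivAt_id x))
      simpa [one_div, Function.comp_def] using this
    have h2 : HasDerivAt (fun y : ℝ => (2 + y) * Real.log (1 + y))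
        ((0 + 1) * Real.log (1 + x) + (2 + x) * (1 / (1 + x))) x :=
      (((hasDerivAt_const x (2:ℝ)).add (hasDerivAt_id x))).mul hlog
    have h3 := h2.sub ((hasDerivAt_id x).const_mul (2:ℝ))
    exact h3.congr_deriv (by ring)
  have hmono : MonotoneOn f (Set.Ici 0) := by
    apply monotoneOn_of_deriv_nonneg (convex_Ici 0)
    · apply ContinuousOn.sub
      · apply ContinuousOn.mul (by fun_prop)
        apply ContinuousOn.log (by fun_prop)
        intro x hx
        simp only [Set.mem_Ici] at hx
        intro h; linarith
      · fun_prop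
    · intro x hx
      rw [interior_Ici] at hx
      exact (hderiv x hx).differentiableAt.differentiableWithinAt
    · intro x hx
      rw [interior_Ici] at hx
      rw [(hderiv x hx).deriv]
      have h1 : (0:ℝ) < 1 + x := by linarith [Set.mem_Ioi.mp hx]
      have h2 := log_ge_one_sub_inv h1
      have h3 : (2 + x) * (1 / (1 + x)) = 2 - x / (1 + x) := by
        field_simp; ring
      have h4 : x / (1 + x) = 1 - 1 / (1 + x) := by field_simp; ring
      linarith
  have h0 : f 0 ≤ f a := hmono (Set.mem_Ici.mpr (le_refl (0:ℝ))) ha ha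
  simp only [hf] at h0
  norm_num at h0
  linarith

theorem Psi_sq_log_le_Phi_sq :
    ∃ C : ℝ, 0 < C ∧ ∀ a : ℝ, 0 ≤ a →
      |∫ s in (0:ℝ)..a, Real.sqrt (((1 + s) * Real.log (1 + s) - s) / (1 + s))| ^ 2
          * Real.log (1 + a)
        ≤ C * |(1 + a) * Real.log (1 + a) - a| ^ 2 := by
  refine ⟨4, by norm_num, fun a ha => ?_⟩
  have h1a : (0:ℝ) < 1 + a := by linarith
  set L := Real.log (1 + a) with hL
  have hL0 : 0 ≤ L := Real.log_nonneg (by linarith)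
  -- Step A: |∫| ≤ √L * a
  have hA : |∫ s in (0:ℝ)..a, Real.sqrt (((1 + s) * Real.log (1 + s) - s) / (1 + s))|
      ≤ Real.sqrt L * a := by
    have := intervalIntegral.norm_integral_le_of_norm_le_const
      (C := Real.sqrt L)
      (f := fun s => Real.sqrt (((1 + s) * Real.log (1 + s) - s) / (1 + s)))
      (a := (0:ℝ)) (b := a) ?_
    · simpa [abs_of_nonneg ha] using this
    · intro x hx
      rw [Set.uIoc_of_le ha] at hx
      obtain ⟨hx0, hxa⟩ := hx
      have h1x : (0:ℝ) < 1 + x := by linarith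
      rw [Real.norm_eq_abs, abs_of_nonneg (Real.sqrt_nonneg _)]
      apply Real.sqrt_le_sqrt
      have hdiv : ((1 + x) * Real.log (1 + x) - x) / (1 + x)
          = Real.log (1 + x) - x / (1 + x) := by
        field_simp
      rw [hdiv]
      have h1 : Real.log (1 + x) ≤ L := Real.log_le_log h1x (by linarith)
      have h2 : 0 ≤ x / (1 + x) := by positivity
      linarith
  -- Step C: a * L ≤ 2 * Φ(a)
  have hkey := key_ineq a ha
  have hPhi : a * L ≤ 2 * ((1 + a) * L - a) := by
    have : (1 + a) * L = L + a * L := by ring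
    nlinarith [hkey]
  have hPhi0 : 0 ≤ (1 + a) * L - a := by nlinarith [mul_nonneg ha hL0]
  -- conclude
  have habs : |(1 + a) * L - a| = (1 + a) * L - a := abs_of_nonneg hPhi0
  have hsq : |∫ s in (0:ℝ)..a, Real.sqrt (((1 + s) * Real.log (1 + s) - s) / (1 + s))| ^ 2
      ≤ (Real.sqrt L * a) ^ 2 := by
    apply pow_le_pow_left₀ (abs_nonneg _) hA
  have hsqL : (Real.sqrt L * a) ^ 2 = L * a ^ 2 := by
    rw [mul_pow, Real.sq_sqrt hL0]
  calc |∫ s in (0:ℝ)..a, Real.sqrt (((1 + s) * Real.log (1 + s) - s) / (1 + s))| ^ 2 * L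
      ≤ (L * a ^ 2) * L := by
        rw [← hsqL]; exact mul_le_mul_of_nonneg_right hsq hL0
    _ = (a * L) ^ 2 := by ring
    _ ≤ (2 * ((1 + a) * L - a)) ^ 2 := by
        apply pow_le_pow_left₀ (mul_nonneg ha hL0) hPhi
    _ = 4 * |(1 + a) * L - a| ^ 2 := by rw [habs]; ring
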